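/- If π(x) ~ x/log x as x → ∞ (the prime number theorem), then the n-th prime p_n satisfies p_n ~ n·log n as n → ∞. -/

import Mathlib

open Filter Real

theorem pnt_implies_nth_prime_asymp
    (h : Filter.Tendsto (fun x : ℝ => (Nat.primeCounting ⌊x⌋₊ : ℝ) / (x / Real.log x))
      Filter.atTop (nhds 1)) :
    Filter.Tendsto (fun n : ℕ => (Nat.nth Nat.Prime (n - 1) : ℝ) / (n * Real.log n))
      Filter.atTop (nhds 1) := by
  have hinf := Nat.infinite_setOf_prime
  set P : ℕ → ℕ := Nat.nth Nat.Prime with hP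
  have hPat : Tendsto P atTop atTop := (Nat.nth_strictMono hinf).tendsto_atTop
  have hq : Tendsto (fun m : ℕ => (P m : ℝ)) atTop atTop :=
    tendsto_natCast_atTop_atTop.comp hPat
  have hlogq : Tendsto (fun m : ℕ => Real.log (P m)) atTop atTop :=
    Real.tendsto_log_atTop.comp hq
  -- π(P m) = m + 1
  have hpi : ∀ m : ℕ, Nat.primeCounting (P m) = m + 1 := by
    intro m
    rw [Nat.primeCounting, Nat.primeCounting', Nat.count_nth_succ_of_infinite hinf]
  -- Step 1: A m := (m+1) * log (P m) / P m → 1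
  have hA : Tendsto (fun m : ℕ => ((m : ℝ) + 1) * Real.log (P m) / (P m : ℝ))
      atTop (nhds 1) := by
    have := h.comp hq
    refine this.congr' ?_
    filter_upwards [] with m
    simp only [Function.comp_apply, Nat.floor_natCast, hpi m]
    push_cast
    rw [div_div_eq_mul_div]
  -- positivity facts, eventually
  have hqpos : ∀ᶠ m : ℕ in atTop, 1 < (P m : ℝ) := hq.eventually_gt_atTop 1
  have hlogpos : ∀ᶠ m : ℕ in atTop, 0 < Real.log (P m) := hlogq.eventually_gt_atTop 0
  -- Step 2: log A m → 0
  have hlogA : Tendsto (fun m : ℕ =>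
      Real.log ((m : ℝ) + 1) + Real.log (Real.log (P m)) - Real.log (P m))
      atTop (nhds 0) := by
    have h0 : Tendsto (fun m : ℕ =>
        Real.log (((m : ℝ) + 1) * Real.log (P m) / (P m : ℝ))) atTop (nhds 0) := by
      simpa using hA.log one_ne_zero
    refine h0.congr' ?_
    filter_upwards [hqpos, hlogpos] with m h1 h2
    rw [Real.log_div (by positivity) (by positivity), Real.log_mul (by positivity) h2.ne']
  -- log log P m / log P m → 0
  have hll : Tendsto (fun m : ℕ => Real.log (Real.log (P m)) / Real.log (P m))
      atTop (nhds 0) :=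
    (Real.isLittleO_log_id_atTop.tendsto_div_nhds_zero).comp hlogq
  -- Step 3: B m := log (m+1) / log (P m) → 1
  have hB : Tendsto (fun m : ℕ => Real.log ((m : ℝ) + 1) / Real.log (P m))
      atTop (nhds 1) := by
    have h1 : Tendsto (fun m : ℕ =>
        (Real.log ((m : ℝ) + 1) + Real.log (Real.log (P m)) - Real.log (P m)) / Real.log (P m)
        - Real.log (Real.log (P m)) / Real.log (P m) + 1) atTop (nhds 1) := by
      have := ((hlogA.div_atTop hlogq).sub hll).add_const 1
      simpa using this
    refine h1.congr' ?_
    filter_upwards [hlogpos] with m h2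
    field_simp
    ring
  -- Combine: P m / ((m+1) * log (m+1)) → 1
  have hmain : Tendsto (fun m : ℕ => (P m : ℝ) / (((m : ℝ) + 1) * Real.log ((m : ℝ) + 1)))
      atTop (nhds 1) := by
    have hAinv : Tendsto (fun m : ℕ => (P m : ℝ) / (((m : ℝ) + 1) * Real.log (P m)))
        atTop (nhds 1) := by
      simpa using hA.inv₀ one_ne_zero
    have hBinv : Tendsto (fun m : ℕ => Real.log (P m) / Real.log ((m : ℝ) + 1))
        atTop (nhds 1) := by
      simpa using hB.inv₀ one_ne_zero
    have h1 : Tendsto (fun m : ℕ => (P m : ℝ) / (((m : ℝ) + 1) * Real.log (P m)) *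
        (Real.log (P m) / Real.log ((m : ℝ) + 1))) atTop (nhds 1) := by
      simpa using hAinv.mul hBinv
    refine h1.congr' ?_
    filter_upwards [hqpos, hlogpos, eventually_gt_atTop 0] with m h1 h2 h3
    have hm1 : (0:ℝ) < (m : ℝ) + 1 := by positivity
    have hlm : 0 < Real.log ((m : ℝ) + 1) := by
      apply Real.log_pos
      exact_mod_cast (by omega : 1 < m + 1)
    field_simp
  -- reindex
  have hsub : Tendsto (fun n : ℕ => n - 1) atTop atTop := tendsto_sub_atTop_nat 1
  have := hmain.comp hsub
  refine this.congr' ?_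
  filter_upwards [eventually_ge_atTop 1] with n hn
  have : ((n : ℕ) - 1 : ℕ) + 1 = n := by omega
  simp only [Function.comp_apply]
  rw [show ((n - 1 : ℕ) : ℝ) + 1 = (n : ℝ) by rw [Nat.cast_sub hn]; simp]
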